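/- Assume c < b in Γ. Then in the Hecke algebra of the affine Weyl group of type C̃2 one has C_0 C_{101} = C_{0101}, where 0101 = s0 s1 s0 s1 = s1 s0 s1 s0 (these are equal by the braid relation (s0 s1)⁴ = e). -/

import Mathlib

open scoped Classical TensorProduct

noncomputable section

namespace KL

variable (Γ : Type) [AddCommGroup Γ] [LinearOrder Γ] [IsOrderedAddMonoid Γ]

/-- The group ring `A = ℤ[Γ]`. -/
abbrev A := AddMonoidAlgebra ℤ Γ

variable {Γ}

/-- The basis element `q^γ` of `A`. -/
def qe (γ : Γ) : A Γ := AddMonoidAlgebra.single γ 1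

/-- `A_{<0}`: the ℤ-span of the `q^γ` with `γ < 0`, i.e. elements supported in negative degrees. -/
def Alt0 (Γ : Type) [AddCommGroup Γ] [LinearOrder Γ] [IsOrderedAddMonoid Γ] : Set (A Γ) :=
  {a : A Γ | ∀ γ ∈ a.coeff.support, γ < 0}

/-- The degree of an element of `A` (`⊥` for `0`). -/
def adeg (a : A Γ) : WithBot Γ := a.coeff.support.max

variable {B W : Type} [Group W] {M : CoxeterMatrix B}
variable {H : Type} [Ring H]

/-- Bundled data of a Coxeter system `(W,S)` together with a positive weight function `L`,
its Hecke algebra `H` over `A = ℤ[Γ]` with standard basis `T`, the bar involution, and the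
Kazhdan-Lusztig basis `C`. -/
structure KLData (M : CoxeterMatrix B) (W : Type) [Group W] (Γ : Type)
    [AddCommGroup Γ] [LinearOrder Γ] [IsOrderedAddMonoid Γ] (H : Type) [Ring H] [Algebra (A Γ) H] where
  /-- the Coxeter system -/
  cs : CoxeterSystem M W
  /-- the weight function -/
  L : W → Γ
  L_add : ∀ w w' : W, cs.length (w * w') = cs.length w + cs.length w' →
    L (w * w') = L w + L w'
  L_pos : ∀ w : W, w ≠ 1 → 0 < L w
  /-- the standard basis `T_w` of the Hecke algebra -/
  bT : Module.Basis W (A Γ) H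
  T_mul : ∀ w w' : W, cs.length (w * w') = cs.length w + cs.length w' →
    bT w * bT w' = bT (w * w')
  T_quad : ∀ i : B,
    (bT (cs.simple i) + algebraMap (A Γ) H (qe (-(L (cs.simple i))))) *
      (bT (cs.simple i) - algebraMap (A Γ) H (qe (L (cs.simple i)))) = 0
  /-- the bar involution -/
  bar : H →+* H
  bar_bar : ∀ h : H, bar (bar h) = h
  bar_q : ∀ γ : Γ, bar (algebraMap (A Γ) H (qe γ)) = algebraMap (A Γ) H (qe (-γ))
  bar_T : ∀ w : W, bar (bT w) * bT w⁻¹ = 1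
  bar_T' : ∀ w : W, bT w⁻¹ * bar (bT w) = 1
  /-- the Kazhdan-Lusztig basis `C_w` -/
  bC : Module.Basis W (A Γ) H
  bar_C : ∀ w : W, bar (bC w) = bC w
  C_mod : ∀ w v : W, bT.repr (bC w - bT w) v ∈ Alt0 Γ

namespace KLData

variable [Algebra (A Γ) H] (d : KLData M W Γ H)

/-- `T_w` -/
def T (w : W) : H := d.bT w

/-- `C_w` -/
def C (w : W) : H := d.bC w

/-- `H_{<0} = ⊕_w A_{<0} T_w`. -/
def Hlt0 : Set H := {h : H | ∀ w : W, d.bT.repr h w ∈ Alt0 Γ}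

/-- The structure constants `h_{x,y,z}` of the KL basis. -/
def hk (x y z : W) : A Γ := d.bC.repr (d.C x * d.C y) z

/-- One step of the preorder `≤_L` : `x` appears in `C_z C_y` for some `z`. -/
def leLstep (x y : W) : Prop := ∃ z : W, d.bC.repr (d.C z * d.C y) x ≠ 0

/-- The preorder `≤_L`. -/
def leL : W → W → Prop := Relation.ReflTransGen d.leLstep

/-- `x ~_L y` -/
def simL (x y : W) : Prop := d.leL x y ∧ d.leL y x

/-- `x ≤_R y` -/
def leR (x y : W) : Prop := d.leL x⁻¹ y⁻¹

/-- `x ~_R y` -/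
def simR (x y : W) : Prop := d.simL x⁻¹ y⁻¹

/-- The preorder `≤_LR`, generated by `≤_L` and `≤_R`. -/
def leLR : W → W → Prop :=
  Relation.ReflTransGen (fun x y => d.leLstep x y ∨ d.leLstep x⁻¹ y⁻¹)

/-- `x ~_LR y` -/
def simLR (x y : W) : Prop := d.leLR x y ∧ d.leLR y x

/-- left cells -/
def IsLeftCell (Θ : Set W) : Prop := ∃ x : W, Θ = {y | d.simL x y}

/-- right cells -/
def IsRightCell (Φ : Set W) : Prop := ∃ x : W, Φ = {y | d.simR x y}

/-- two-sided cells -/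
def IsTwoSidedCell (c : Set W) : Prop := ∃ x : W, c = {y | d.simLR x y}

/-- `z < c` for a two-sided cell `c`. -/
def ltc (c : Set W) (z : W) : Prop := z ∉ c ∧ ∀ w ∈ c, d.leLR z w

/-- `z ≤ c` for a two-sided cell `c`. -/
def lec (c : Set W) (z : W) : Prop := ∀ w ∈ c, d.leLR z w

/-- The ideal `H_{<c}`, spanned by the `C_z` with `z < c`. -/
def Hltc (c : Set W) : Submodule (A Γ) H :=
  Submodule.span (A Γ) (d.C '' {z : W | d.ltc c z})

/-- Bruhat order on `W`. -/
def bruhatLE : W → W → Prop :=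
  Relation.ReflTransGen (fun x y => ∃ t : W, d.cs.IsReflection t ∧ y = x * t ∧
    d.cs.length x < d.cs.length y)

/-- Strict Bruhat order on `W`. -/
def bruhatLT (x y : W) : Prop := d.bruhatLE x y ∧ x ≠ y

/-- Duflo order: `x ≤_D y` iff `l(x⁻¹y) = l(y) - l(x)`. -/
def dufloLE (x y : W) : Prop :=
  d.cs.length x + d.cs.length (x⁻¹ * y) = d.cs.length y

/-- The `A`-linear anti-automorphism `♭` of `H` with `T_w ↦ T_{w⁻¹}`. -/
def flat : H →ₗ[A Γ] H := d.bT.constr ℕ (fun w => d.bT w⁻¹)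

/-- `P_{e,z}` : the coefficient of `T_e` in `C_z`. -/
def Pel (z : W) : A Γ := d.bT.repr (d.C z) 1

/-- `Δ(z)`, defined by `P_{e,z} = n_z q^{-Δ(z)} + lower degree terms`. -/
def Del (z : W) : Γ := -((d.Pel z).coeff.support.max.unbotD 0)

/-- `n_z`, defined by `P_{e,z} = n_z q^{-Δ(z)} + lower degree terms`. -/
def nz (z : W) : ℤ := (d.Pel z).coeff (-(d.Del z))

/-- `af : W → Γ` is Lusztig's `a`-function iff for each `z`, `af z` is the (attained)
supremum of the degrees of the `h_{x,y,z}`. -/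
def IsAFunction (af : W → Γ) : Prop :=
  ∀ z : W, (∀ x y : W, adeg (d.hk x y z) ≤ (af z : WithBot Γ)) ∧
    (∃ x y : W, adeg (d.hk x y z) = (af z : WithBot Γ))

/-- `γ_{x,y,z}` : the coefficient of `q^{a(z⁻¹)}` in `h_{x,y,z⁻¹}`. -/
def gam (af : W → Γ) (x y z : W) : ℤ := (d.hk x y z⁻¹).coeff (af z⁻¹)

/-- The set `𝒟 = {z | a(z) = Δ(z)}`. -/
def Dset (af : W → Γ) : Set W := {z : W | af z = d.Del z}

end KLData

variable [Algebra (A Γ) H]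

/-- Assumption (*): a two-sided cell `c` equipped with subsets `D ⊆ c` and
`B_d, U_d ⊆ W` (`d ∈ D`) satisfying conditions (ia)-(iv). -/
structure CellDecomp (d : KLData M W Γ H) (c : Set W) where
  isCell : d.IsTwoSidedCell c
  D : Set W
  Bd : W → Set W
  Ud : W → Set W
  D_sub : D ⊆ c
  -- (ia) : c = c⁻¹ = ⊔_{d ∈ D} B_d d U_d (disjoint union)
  c_inv : ∀ w : W, w ∈ c ↔ w⁻¹ ∈ c
  c_eq : c = ⋃ d0 ∈ D, {w : W | ∃ b ∈ Bd d0, ∃ u ∈ Ud d0, w = b * d0 * u}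
  disj : ∀ d1 ∈ D, ∀ d2 ∈ D, d1 ≠ d2 →
    Disjoint {w : W | ∃ b ∈ Bd d1, ∃ u ∈ Ud d1, w = b * d1 * u}
             {w : W | ∃ b ∈ Bd d2, ∃ u ∈ Ud d2, w = b * d2 * u}
  -- (ib)
  len_add : ∀ d0 ∈ D, ∀ b ∈ Bd d0, ∀ u ∈ Ud d0,
    d.cs.length (b * d0 * u) = d.cs.length b + d.cs.length d0 + d.cs.length u
  -- (ic)
  one_mem_B : ∀ d0 ∈ D, (1 : W) ∈ Bd d0
  one_mem_U : ∀ d0 ∈ D, (1 : W) ∈ Ud d0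
  Binv_sub_U : ∀ d0 ∈ D, ∀ b ∈ Bd d0, b⁻¹ ∈ Ud d0
  -- (id)
  not_mem_c : ∀ d0 ∈ D, ∀ w : W, w ∉ Ud d0 →
    (∀ i : B, d.bruhatLE (d.cs.simple i) d0 →
      d.cs.length (d.cs.simple i * w) = d.cs.length w + 1) → d0 * w ∉ c
  -- (iia) : each d ∈ D is an involution in a finite parabolic subgroup
  d_inv : ∀ d0 ∈ D, d0 * d0 = 1 ∧ d0 ≠ 1
  d_parabolic : ∀ d0 ∈ D, ∃ I : Set B,
    (Subgroup.closure (d.cs.simple '' I) : Set W).Finite ∧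
    d0 ∈ Subgroup.closure (d.cs.simple '' I)
  s_len : ∀ d0 ∈ D, ∀ i : B, d.bruhatLE (d.cs.simple i) d0 →
    ∀ u ∈ Ud d0, d.cs.length (d.cs.simple i * u) = d.cs.length u + 1
  -- (iib)
  TsC : ∀ d0 ∈ D, ∀ i : B, d.bruhatLE (d.cs.simple i) d0 →
    ∃ a : A Γ, d.T (d.cs.simple i) * d.C d0 - a • d.C d0 ∈ d.Hltc c
  -- (iic)
  h_ne : ∀ d0 ∈ D, d.hk d0 d0 d0 ≠ 0
  -- (iii)
  dU_rightCell : ∀ d0 ∈ D, d.IsRightCell {w : W | ∃ u ∈ Ud d0, w = d0 * u}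
  -- (iv)
  TCT : ∀ d0 ∈ D, ∀ b ∈ Bd d0, ∀ u ∈ Ud d0,
    ∃ h0 ∈ d.Hlt0, ∃ h1 ∈ d.Hltc c,
      d.T b * d.C d0 * d.T u - d.T (b * d0 * u) = h0 + h1

namespace CellDecomp

variable {d : KLData M W Γ H} {c : Set W} (cd : CellDecomp d c)

/-- `F` is the element `F_w` : `F = T_w + Σ_{y ∈ U_d, y < w} p_{y,w} T_y` with
`p_{y,w} ∈ A_{<0}`, and `C_d F ≡ C_{dw} mod H_{<c}`. -/
def IsF (d0 w : W) (F : H) : Prop :=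
  (d.bT.repr F w = 1 ∧
    ∀ y : W, y ≠ w → d.bT.repr F y ≠ 0 →
      y ∈ cd.Ud d0 ∧ d.bruhatLT y w ∧ d.bT.repr F y ∈ Alt0 Γ) ∧
  d.C d0 * F - d.C (d0 * w) ∈ d.Hltc c

/-- The right cell `Φ_{b,d} = b d U_d`. -/
def Phi (b d0 : W) : Set W := {x : W | ∃ u ∈ cd.Ud d0, x = b * d0 * u}

/-- The left cell `Θ_{b,d} = Φ_{b,d}⁻¹`. -/
def Theta (b d0 : W) : Set W := {x : W | ∃ u ∈ cd.Ud d0, x = u⁻¹ * d0 * b⁻¹}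

end CellDecomp

/-- The Coxeter matrix of affine type C̃2: generators `s0 s1 s2`,
`(s0 s1)⁴ = (s1 s2)⁴ = (s0 s2)² = 1`. -/
def Ct2 : CoxeterMatrix (Fin 3) where
  M := !![1, 4, 2; 4, 1, 4; 2, 4, 1]
  isSymm := by decide
  diagonal := by decide
  off_diagonal := by intro i i' h; fin_cases i <;> fin_cases i' <;> simp_all

/-- The Coxeter matrix of affine type G̃2: generators `s0 s1 s2`,
`(s0 s1)³ = (s1 s2)⁶ = (s0 s2)² = 1`. -/
def Gt2 : CoxeterMatrix (Fin 3) where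
  M := !![1, 3, 2; 3, 1, 6; 2, 6, 1]
  isSymm := by decide
  diagonal := by decide
  off_diagonal := by intro i i' h; fin_cases i <;> fin_cases i' <;> simp_all

/-- `ξ_γ = q^γ - q^{-γ}`. -/
def xi (γ : Γ) : A Γ := qe γ - qe (-γ)

/-- `η_γ = q^γ + q^{-γ}`. -/
def eta (γ : Γ) : A Γ := qe γ + qe (-γ)


namespace KLData

variable [Algebra (A Γ) H] (d : KLData M W Γ H)

/-- The free `A ⊗_ℤ A`-module with basis `{E_w : w ∈ c}`. -/
abbrev Emod (Γ : Type) [AddCommGroup Γ] [LinearOrder Γ] [IsOrderedAddMonoid Γ] {W : Type} (c : Set W) :=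
  ↥c →₀ (A Γ ⊗[ℤ] A Γ)

/-- `C_x ⬝ E_w = Σ_{z ∈ c} (h_{x,w,z} ⊗ 1) E_z`. -/
def lactB (c : Set W) (x : W) (w : ↥c) : Emod Γ c :=
  Finsupp.mapRange (fun a => a ⊗ₜ[ℤ] (1 : A Γ)) (by simp)
    ((d.bC.repr (d.C x * d.C (w : W))).subtypeDomain (· ∈ c))

/-- The left action of `C_x` on `E`, extended `(A ⊗ A)`-linearly from the basis. -/
def lact (c : Set W) (x : W) (v : Emod Γ c) : Emod Γ c :=
  v.sum fun w t => t • d.lactB c x w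

/-- `E_w ⬝ C_y = Σ_{z ∈ c} (1 ⊗ h_{w,y,z}) E_z`. -/
def ractB (c : Set W) (y : W) (w : ↥c) : Emod Γ c :=
  Finsupp.mapRange (fun a => (1 : A Γ) ⊗ₜ[ℤ] a) (by simp)
    ((d.bC.repr (d.C (w : W) * d.C y)).subtypeDomain (· ∈ c))

/-- The right action of `C_y` on `E`, extended `(A ⊗ A)`-linearly from the basis. -/
def ract (c : Set W) (y : W) (v : Emod Γ c) : Emod Γ c :=
  v.sum fun w t => t • d.ractB c y w

end KLData

end KL

namespace KL

section AuxA

variable {Γ : Type} [AddCommGroup Γ] [LinearOrder Γ] [IsOrderedAddMonoid Γ]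

theorem qe_mul (γ δ : Γ) : (qe γ : A Γ) * qe δ = qe (γ + δ) := by
  simp [qe, AddMonoidAlgebra.single_mul_single]

theorem qe_zero : (qe 0 : A Γ) = 1 := rfl

/-- The bar involution on `A`. -/
def barA : A Γ ≃+ A Γ :=
  AddMonoidAlgebra.coeffAddEquiv.trans
    ((Finsupp.domCongr (Equiv.neg Γ)).trans AddMonoidAlgebra.coeffAddEquiv.symm)

theorem barA_apply (x : A Γ) (γ : Γ) : (barA x).coeff γ = x.coeff (-γ) := rfl

theorem barA_single (γ : Γ) (n : ℤ) :
    barA (AddMonoidAlgebra.single γ n : A Γ) = AddMonoidAlgebra.single (-γ) n := by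
  apply AddMonoidAlgebra.coeff_injective
  ext δ
  rw [barA_apply, AddMonoidAlgebra.coeff_single, AddMonoidAlgebra.coeff_single,
    Finsupp.single_apply, Finsupp.single_apply]
  by_cases h : γ = -δ
  · rw [if_pos h, if_pos (by rw [h, neg_neg])]
  · rw [if_neg h, if_neg (by intro h2; exact h (by rw [← h2, neg_neg]))]

theorem barA_qe (γ : Γ) : barA (qe γ : A Γ) = qe (-γ) := barA_single γ 1

theorem Alt0_zero : (0 : A Γ) ∈ Alt0 Γ := by simp [Alt0]

theorem Alt0_add {x y : A Γ} (hx : x ∈ Alt0 Γ) (hy : y ∈ Alt0 Γ) : x + y ∈ Alt0 Γ := by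
  intro γ hγ
  rcases Finset.mem_union.mp (Finsupp.support_add hγ) with h | h
  exacts [hx _ h, hy _ h]

theorem Alt0_neg {x : A Γ} (hx : x ∈ Alt0 Γ) : -x ∈ Alt0 Γ := by
  intro γ hγ
  rw [AddMonoidAlgebra.coeff_neg, Finsupp.support_neg] at hγ
  exact hx γ hγ

theorem Alt0_sub {x y : A Γ} (hx : x ∈ Alt0 Γ) (hy : y ∈ Alt0 Γ) : x - y ∈ Alt0 Γ := by
  rw [sub_eq_add_neg]; exact Alt0_add hx (Alt0_neg hy)

theorem Alt0_qe {γ : Γ} (h : γ < 0) : (qe γ : A Γ) ∈ Alt0 Γ := by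
  intro δ hδ
  simp only [qe] at hδ
  have := Finsupp.support_single_subset hδ
  simp only [Finset.mem_singleton] at this
  subst this; exact h

theorem mul_coeff_eq_zero {x y : A Γ} {γ0 : Γ} (hx : ∀ α ∈ x.coeff.support, α ≤ γ0)
    (hy : y ∈ Alt0 Γ) : (x * y).coeff γ0 = 0 := by
  classical
  rw [AddMonoidAlgebra.coeff_mul]
  refine Finset.sum_eq_zero fun α hα => Finset.sum_eq_zero fun β hβ => ?_
  show (if α + β = γ0 then x.coeff α * y.coeff β else 0) = 0
  have h1 : α + β < γ0 := by
    calc α + β < α + 0 := by exact add_lt_add_right (hy β hβ) α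
    _ = α := add_zero α
    _ ≤ γ0 := hx α hα
  rw [if_neg (ne_of_lt h1)]

end AuxA

section AuxH

variable {B W : Type} [Group W] {M : CoxeterMatrix B} {H : Type} [Ring H]
variable {Γ : Type} [AddCommGroup Γ] [LinearOrder Γ] [IsOrderedAddMonoid Γ] [Algebra (A Γ) H] (d : KLData M W Γ H)

theorem T_one : d.bT (1 : W) = 1 := by
  have h1 : d.bT (1 : W) * d.bT (1 : W) = d.bT (1 : W) := by
    simpa using d.T_mul 1 1 (by simp)
  have h2 : d.bar (d.bT (1 : W)) * d.bT (1 : W) = 1 := by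
    simpa using d.bar_T 1
  calc d.bT (1 : W) = (d.bar (d.bT (1 : W)) * d.bT (1 : W)) * d.bT (1 : W) := by
        rw [h2, one_mul]
    _ = d.bar (d.bT (1 : W)) * (d.bT (1 : W) * d.bT (1 : W)) := by rw [mul_assoc]
    _ = 1 := by rw [h1, h2]

theorem bar_algebraMap (a : A Γ) :
    d.bar (algebraMap (A Γ) H a) = algebraMap (A Γ) H (barA a) := by
  induction a using AddMonoidAlgebra.induction_linear with
  | zero => simp
  | add f g hf hg => simp [map_add, hf, hg]
  | single γ n =>
      have h1 : (AddMonoidAlgebra.single γ n : A Γ) = n • (qe γ : A Γ) := by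
        simp [qe, AddMonoidAlgebra.smul_single]
      rw [h1, map_zsmul, map_zsmul, map_zsmul, d.bar_q, barA_qe, map_zsmul]

theorem bar_smul (a : A Γ) (x : H) : d.bar (a • x) = barA a • d.bar x := by
  rw [Algebra.smul_def, map_mul, bar_algebraMap, Algebra.smul_def]

theorem repr_smul_basis {a : A Γ} (ha : a ∈ Alt0 Γ) (u v : W) :
    d.bT.repr (a • d.bT u) v ∈ Alt0 Γ := by
  classical
  rw [map_smul, Module.Basis.repr_self, Finsupp.smul_apply, Finsupp.single_apply]
  by_cases h : u = v
  · simpa [h] using ha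
  · simpa [h] using Alt0_zero

theorem repr_sum_basis (bX : Module.Basis W (A Γ) H) (S : Finset W) (f : W → A Γ) (v : W) :
    bX.repr (∑ z ∈ S, f z • bX z) v = if v ∈ S then f v else 0 := by
  classical
  rw [map_sum]
  have h1 : ∀ z : W, bX.repr (f z • bX z) = Finsupp.single z (f z) := by
    intro z
    rw [map_smul, Module.Basis.repr_self, Finsupp.smul_single, smul_eq_mul, mul_one]
  simp_rw [h1]
  rw [Finsupp.finset_sum_apply]
  simp_rw [Finsupp.single_apply]
  exact Finset.sum_ite_eq' S v f

theorem vanish (h : H) (hbar : d.bar h = h) (hlt : ∀ v : W, d.bT.repr h v ∈ Alt0 Γ) :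
    h = 0 := by
  classical
  by_contra hne
  set p := d.bC.repr h with hp
  have hpne : p ≠ 0 := by
    intro h0
    apply hne
    have := congrArg (d.bC.repr.symm) h0
    simpa [hp] using this
  have hdecomp : ∑ z ∈ p.support, p z • d.bC z = h := by
    conv_rhs => rw [← d.bC.linearCombination_repr h]
    rw [Finsupp.linearCombination_apply, Finsupp.sum]
  have hbar2 : ∑ z ∈ p.support, (barA (p z)) • d.bC z = h := by
    conv_rhs => rw [← hbar, ← hdecomp]
    rw [map_sum]
    exact Finset.sum_congr rfl fun z _ => by rw [bar_smul, d.bar_C]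
  have hsym : ∀ z : W, barA (p z) = p z := by
    intro z
    have e1 := congrArg (fun x : H => d.bC.repr x z) hdecomp
    have e2 := congrArg (fun x : H => d.bC.repr x z) hbar2
    simp only [repr_sum_basis] at e1 e2
    by_cases hz : z ∈ p.support
    · rw [if_pos hz] at e1 e2
      rw [e2, ← e1]
    · have : p z = 0 := Finsupp.notMem_support_iff.mp hz
      rw [this, map_zero]
  have hTrepr : ∀ v : W, d.bT.repr h v = ∑ z ∈ p.support, p z * d.bT.repr (d.bC z) v := by
    intro v
    conv_lhs => rw [← hdecomp]
    rw [map_sum, Finsupp.finset_sum_apply]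
    exact Finset.sum_congr rfl fun z _ => by
      rw [map_smul, Finsupp.smul_apply, smul_eq_mul]
  obtain ⟨z1, hz1⟩ : ∃ z, p z ≠ 0 := by
    by_contra hcon
    push_neg at hcon
    exact hpne (Finsupp.ext hcon)
  set Γ0 : Finset Γ := p.support.sup (fun z => (p z).coeff.support) with hΓ0
  have hne0 : Γ0.Nonempty := by
    obtain ⟨γ, hγ⟩ := Finsupp.support_nonempty_iff.mpr (mt AddMonoidAlgebra.coeff_eq_zero.mp hz1)
    exact ⟨γ, (Finset.le_sup (f := fun z => (p z).coeff.support)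
      (Finsupp.mem_support_iff.mpr hz1)) hγ⟩
  set γ0 := Γ0.max' hne0 with hγ0def
  have hub : ∀ z : W, ∀ α ∈ (p z).coeff.support, α ≤ γ0 := by
    intro z α hα
    by_cases hz : z ∈ p.support
    · exact Finset.le_max' _ _ ((Finset.le_sup (f := fun z => (p z).coeff.support) hz) hα)
    · rw [Finsupp.notMem_support_iff.mp hz] at hα
      simp at hα
  obtain ⟨z0, hz0mem, hγ0mem⟩ : ∃ z0 ∈ p.support, γ0 ∈ (p z0).coeff.support := by
    exact Finset.mem_sup.mp (Γ0.max'_mem hne0)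
  have hγ0nonneg : 0 ≤ γ0 := by
    have h1 : (p z0).coeff (-γ0) ≠ 0 := by
      have h2 : (barA (p z0)).coeff γ0 = (p z0).coeff (-γ0) := barA_apply _ _
      rw [hsym z0] at h2
      rw [← h2]
      exact Finsupp.mem_support_iff.mp hγ0mem
    have h3 : -γ0 ≤ γ0 := hub z0 _ (Finsupp.mem_support_iff.mpr h1)
    exact neg_le_self_iff.mp h3
  have hcoeff : (d.bT.repr h z0).coeff γ0 = (p z0).coeff γ0 := by
    rw [hTrepr z0, AddMonoidAlgebra.coeff_sum, Finsupp.finset_sum_apply]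
    have hterm : ∀ z ∈ p.support,
        (p z * d.bT.repr (d.bC z) z0).coeff γ0 = if z = z0 then (p z0).coeff γ0 else 0 := by
      intro z hz
      have hsplit : d.bT.repr (d.bC z) z0 =
          d.bT.repr (d.bC z - d.bT z) z0 + (if z = z0 then 1 else 0) := by
        rw [map_sub, Finsupp.sub_apply]
        have : d.bT.repr (d.bT z) z0 = if z = z0 then 1 else 0 := by
          rw [Module.Basis.repr_self, Finsupp.single_apply]
        rw [this]
        by_cases hzz : z = z0 <;> simp [hzz]
      rw [hsplit, mul_add, AddMonoidAlgebra.coeff_add, Finsupp.add_apply,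
        mul_coeff_eq_zero (hub z) (d.C_mod z z0), zero_add]
      by_cases hzz : z = z0
      · subst hzz; simp
      · simp [hzz]
    rw [Finset.sum_congr rfl hterm, Finset.sum_ite_eq' p.support z0 (fun _ => (p z0).coeff γ0),
      if_pos hz0mem]
  have hzero : (d.bT.repr h z0).coeff γ0 = 0 := by
    by_contra hne2
    have hmem2 : γ0 ∈ (d.bT.repr h z0).coeff.support := Finsupp.mem_support_iff.mpr hne2
    exact absurd (hlt z0 γ0 hmem2) (not_lt.mpr hγ0nonneg)
  rw [hcoeff] at hzero
  exact Finsupp.mem_support_iff.mp hγ0mem hzero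

theorem C_eq (w : W) (X : H) (hbarX : d.bar X = X)
    (hlow : ∀ v : W, d.bT.repr (X - d.bT w) v ∈ Alt0 Γ) : d.bC w = X := by
  have h0 : d.bC w - X = 0 := by
    refine vanish d _ (by rw [map_sub, d.bar_C, hbarX]) fun v => ?_
    have hdec : d.bC w - X = (d.bC w - d.bT w) - (X - d.bT w) := by abel
    rw [hdec, map_sub, Finsupp.sub_apply]
    exact Alt0_sub (d.C_mod w v) (hlow v)
  exact sub_eq_zero.mp h0

theorem Tsq (i : B) :
    d.bT (d.cs.simple i) * d.bT (d.cs.simple i) =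
      1 + (qe (d.L (d.cs.simple i)) - qe (-(d.L (d.cs.simple i)))) • d.bT (d.cs.simple i) := by
  have hq := d.T_quad i
  set t := d.bT (d.cs.simple i)
  set L := d.L (d.cs.simple i)
  have h1 : algebraMap (A Γ) H (qe (-L)) * algebraMap (A Γ) H (qe L) = 1 := by
    rw [← map_mul, qe_mul, neg_add_cancel, qe_zero, map_one]
  rw [add_mul, mul_sub, mul_sub, h1] at hq
  have h2 : t * algebraMap (A Γ) H (qe L) = qe L • t := by
    rw [← Algebra.commutes, ← Algebra.smul_def]
  have h3 : algebraMap (A Γ) H (qe (-L)) * t = qe (-L) • t := (Algebra.smul_def _ _).symm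
  rw [h2, h3] at hq
  rw [sub_smul]
  refine eq_of_sub_eq_zero ?_
  calc t * t - (1 + (qe L • t - qe (-L) • t))
      = t * t - qe L • t + (qe (-L) • t - 1) := by abel
    _ = 0 := hq

theorem bar_T_simple (i : B) :
    d.bar (d.bT (d.cs.simple i)) =
      d.bT (d.cs.simple i) - (qe (d.L (d.cs.simple i)) - qe (-(d.L (d.cs.simple i)))) • 1 := by
  set t := d.bT (d.cs.simple i)
  set L := d.L (d.cs.simple i)
  have hb1 : d.bar t * t = 1 := by
    have := d.bar_T (d.cs.simple i)
    rwa [d.cs.inv_simple] at this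
  have hinv : t * (t - (qe L - qe (-L)) • 1) = 1 := by
    rw [mul_sub, Tsq d i, mul_smul_comm, mul_one]
    abel
  calc d.bar t = d.bar t * (t * (t - (qe L - qe (-L)) • 1)) := by rw [hinv, mul_one]
    _ = (d.bar t * t) * (t - (qe L - qe (-L)) • 1) := by rw [mul_assoc]
    _ = t - (qe L - qe (-L)) • 1 := by rw [hb1, one_mul]

end AuxH


section Dih

open DihedralGroup

/-- Lift of the `C̃2` generators to the dihedral group of order 8. -/
def dihF : Fin 3 → DihedralGroup 4 := ![sr 0, sr 1, sr 0]

theorem dihF_liftable : CoxeterMatrix.IsLiftable Ct2 dihF := by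
  intro i i'
  fin_cases i <;> fin_cases i' <;> decide

/-- Coxeter length in the dihedral group of order 8 w.r.t. `sr 0`, `sr 1`. -/
def nu : DihedralGroup 4 → ℕ
  | .r k => if k = 0 then 0 else if k = 2 then 4 else 2
  | .sr k => if k = 0 ∨ k = 1 then 1 else 3

theorem nu_step : ∀ (i : Fin 3) (x : DihedralGroup 4), nu (dihF i * x) ≤ nu x + 1 := by
  decide

variable {W : Type} [Group W]

theorem nu_le_length (cs : CoxeterSystem Ct2 W) (w : W) :
    nu (cs.lift ⟨dihF, dihF_liftable⟩ w) ≤ cs.length w := by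
  obtain ⟨ω, hω, rfl⟩ := cs.exists_reduced_word w
  rw [hω.eq]
  clear hω
  induction ω with
  | nil =>
      rw [cs.wordProd_nil, map_one]
      exact le_refl 0
  | cons i ω ih =>
      rw [cs.wordProd_cons, map_mul, cs.lift_apply_simple]
      calc nu (dihF i * (cs.lift ⟨dihF, dihF_liftable⟩) (cs.wordProd ω))
          ≤ nu ((cs.lift ⟨dihF, dihF_liftable⟩) (cs.wordProd ω)) + 1 := nu_step i _
        _ ≤ ω.length + 1 := by exact Nat.add_le_add_right ih 1
        _ = (i :: ω).length := by simp

theorem length_eq_of_nu (cs : CoxeterSystem Ct2 W) (w : W) (ω : List (Fin 3))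
    (hw : w = cs.wordProd ω) (hnu : nu (cs.lift ⟨dihF, dihF_liftable⟩ w) = ω.length) :
    cs.length w = ω.length := by
  refine le_antisymm ?_ ?_
  · rw [hw]; exact cs.length_wordProd_le ω
  · rw [← hnu]; exact nu_le_length cs w

end Dih

end KL

open KL

/-- in type C̃2 with `c < b`, `C_0 C_{101} = C_{0101}`. -/
theorem statement_15 {W : Type} [Group W] {Γ : Type}
    [AddCommGroup Γ] [LinearOrder Γ] [IsOrderedAddMonoid Γ] {H : Type} [Ring H] [Algebra (A Γ) H] (d : KLData Ct2 W Γ H)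
    (a b c : Γ) (ha : 0 < a) (hb : 0 < b) (hc : 0 < c)
    (s0 s1 s2 : W) (hs0 : s0 = d.cs.simple 0) (hs1 : s1 = d.cs.simple 1)
    (hs2 : s2 = d.cs.simple 2)
    (hL0 : d.L s0 = c) (hL1 : d.L s1 = b) (hL2 : d.L s2 = a) (hcb : c < b) :
    d.C s0 * d.C (s1 * s0 * s1) = d.C (s0 * s1 * s0 * s1) := by
  classical
  -- abbreviations
  have hadd : ∀ x y : Γ, x < 0 → y < 0 → x + y < 0 := fun x y hx hy => by
    simpa using add_lt_add hx hy
  have hnb : (-b : Γ) < 0 := neg_lt_zero.mpr hb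
  have hnc : (-c : Γ) < 0 := neg_lt_zero.mpr hc
  have hpos : (0 : Γ) < -c + b := by
    have h1 := sub_pos.mpr hcb
    rwa [sub_eq_add_neg, add_comm] at h1
  have hncb : (-(-c + b) : Γ) < 0 := neg_lt_zero.mpr hpos
  -- lengths
  have ls0 : d.cs.length s0 = 1 := by rw [hs0]; exact d.cs.length_simple 0
  have ls1 : d.cs.length s1 = 1 := by rw [hs1]; exact d.cs.length_simple 1
  have hw01 : s0 * s1 = d.cs.wordProd [0, 1] := by
    rw [hs0, hs1]
    simp [CoxeterSystem.wordProd_cons, CoxeterSystem.wordProd_nil]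
  have hw10 : s1 * s0 = d.cs.wordProd [1, 0] := by
    rw [hs0, hs1]
    simp [CoxeterSystem.wordProd_cons, CoxeterSystem.wordProd_nil]
  have hw101 : s1 * s0 * s1 = d.cs.wordProd [1, 0, 1] := by
    rw [hs0, hs1]
    simp [CoxeterSystem.wordProd_cons, CoxeterSystem.wordProd_nil, mul_assoc]
  have hw010 : s0 * s1 * s0 = d.cs.wordProd [0, 1, 0] := by
    rw [hs0, hs1]
    simp [CoxeterSystem.wordProd_cons, CoxeterSystem.wordProd_nil, mul_assoc]
  have hw0101 : s0 * s1 * s0 * s1 = d.cs.wordProd [0, 1, 0, 1] := by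
    rw [hs0, hs1]
    simp [CoxeterSystem.wordProd_cons, CoxeterSystem.wordProd_nil, mul_assoc]
  have hnu : ∀ (w : W) (ω : List (Fin 3)), w = d.cs.wordProd ω →
      nu ((ω.map dihF).prod) = ω.length → d.cs.length w = ω.length := by
    intro w ω hw h
    refine length_eq_of_nu d.cs w ω hw ?_
    rw [hw]
    have : ∀ ω' : List (Fin 3),
        d.cs.lift ⟨dihF, dihF_liftable⟩ (d.cs.wordProd ω') = (ω'.map dihF).prod := by
      intro ω'
      induction ω' with
      | nil => simp [CoxeterSystem.wordProd_nil]
      | cons i ω' ih =>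
          rw [d.cs.wordProd_cons, map_mul, d.cs.lift_apply_simple, List.map_cons,
            List.prod_cons, ih]
    rw [this ω, h]
  have l01 : d.cs.length (s0 * s1) = 2 := hnu _ [0, 1] hw01 (by decide)
  have l10 : d.cs.length (s1 * s0) = 2 := hnu _ [1, 0] hw10 (by decide)
  have l101 : d.cs.length (s1 * s0 * s1) = 3 := hnu _ [1, 0, 1] hw101 (by decide)
  have l010 : d.cs.length (s0 * s1 * s0) = 3 := hnu _ [0, 1, 0] hw010 (by decide)
  have l0101 : d.cs.length (s0 * s1 * s0 * s1) = 4 := hnu _ [0, 1, 0, 1] hw0101 (by decide)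
  -- T products
  have hT01 : d.bT s0 * d.bT s1 = d.bT (s0 * s1) :=
    d.T_mul s0 s1 (by rw [l01, ls0, ls1])
  have hT10 : d.bT s1 * d.bT s0 = d.bT (s1 * s0) :=
    d.T_mul s1 s0 (by rw [l10, ls0, ls1])
  have hT1_01 : d.bT s1 * d.bT (s0 * s1) = d.bT (s1 * s0 * s1) := by
    have h1 : s1 * (s0 * s1) = s1 * s0 * s1 := by group
    have := d.T_mul s1 (s0 * s1) (by rw [h1, l101, ls1, l01])
    rwa [h1] at this
  have hT0_10 : d.bT s0 * d.bT (s1 * s0) = d.bT (s0 * s1 * s0) := by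
    have h1 : s0 * (s1 * s0) = s0 * s1 * s0 := by group
    have := d.T_mul s0 (s1 * s0) (by rw [h1, l010, ls0, l10])
    rwa [h1] at this
  have hT0_101 : d.bT s0 * d.bT (s1 * s0 * s1) = d.bT (s0 * s1 * s0 * s1) := by
    have h1 : s0 * (s1 * s0 * s1) = s0 * s1 * s0 * s1 := by group
    have := d.T_mul s0 (s1 * s0 * s1) (by rw [h1, l0101, ls0, l101])
    rwa [h1] at this
  -- quadratic relations
  have hq0 : d.bT s0 * d.bT s0 = 1 + (qe c - qe (-c)) • d.bT s0 := by
    have := Tsq d 0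
    rw [← hs0, hL0] at this
    exact this
  have hq1 : d.bT s1 * d.bT s1 = 1 + (qe b - qe (-b)) • d.bT s1 := by
    have := Tsq d 1
    rw [← hs1, hL1] at this
    exact this
  have hbar0 : d.bar (d.bT s0) = d.bT s0 - (qe c - qe (-c)) • 1 := by
    have := bar_T_simple d 0
    rw [← hs0, hL0] at this
    exact this
  have hbar1 : d.bar (d.bT s1) = d.bT s1 - (qe b - qe (-b)) • 1 := by
    have := bar_T_simple d 1
    rw [← hs1, hL1] at this
    exact this
  have h0T2 : d.bT s0 * d.bT (s0 * s1) = d.bT s1 + (qe c - qe (-c)) • d.bT (s0 * s1) := by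
    rw [← hT01, ← mul_assoc, hq0, add_mul, one_mul, smul_mul_assoc, hT01]
  -- candidates
  set c0 : H := d.bT s0 + qe (-c) • 1 with hc0def
  set c1 : H := d.bT s1 + qe (-b) • 1 with hc1def
  have hc01 : c0 * c1 = d.bT (s0 * s1) + qe (-b) • d.bT s0 + qe (-c) • d.bT s1
      + qe (-c + -b) • 1 := by
    rw [hc0def, hc1def]
    simp only [mul_add, add_mul, smul_add, smul_mul_assoc, mul_smul_comm, smul_smul, one_mul,
      mul_one, hT01, qe_mul]
    rw [show (-b + -c : Γ) = -c + -b from by abel]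
    module
  set X101 : H := c1 * (c0 * c1) - (qe (-c + b) + qe (-(-c + b))) • c1 with hX101def
  have hX101 : X101 = d.bT (s1 * s0 * s1) + qe (-b) • d.bT (s0 * s1)
      + qe (-b) • d.bT (s1 * s0)
      + (qe (-c + -b) - qe (-(-c + b))) • d.bT s1 + qe (-b + -b) • d.bT s0
      + (qe (-c + -b + -b) - qe (-(-c + b) + -b)) • 1 := by
    rw [hX101def, hc01, hc1def]
    simp only [mul_add, add_mul, mul_sub, sub_mul, smul_mul_assoc, mul_smul_comm,
      smul_smul, one_mul, mul_one, smul_add, smul_sub, sub_smul, add_smul,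
      hT1_01, hT10, hq1, qe_mul]
    rw [show ((-c + b) + -b : Γ) = -c from by abel]
    module
  have hXfull : c0 * X101 = d.bT (s0 * s1 * s0 * s1) + qe (-c) • d.bT (s1 * s0 * s1)
      + qe (-b) • d.bT (s0 * s1 * s0)
      + qe (-c + -b) • d.bT (s0 * s1) + qe (-b + -c) • d.bT (s1 * s0)
      + qe (-c + -b + -c) • d.bT s1 + qe (-c + -b + -b) • d.bT s0
      + qe (-c + -b + -b + -c) • 1 := by
    rw [hX101, hc0def]
    simp only [mul_add, add_mul, mul_sub, sub_mul, smul_mul_assoc, mul_smul_comm,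
      smul_smul, one_mul, mul_one, smul_add, smul_sub, sub_smul, add_smul,
      hT0_101, hT0_10, h0T2, hT01, hq0, qe_mul]
    rw [show (-(-c + b) : Γ) = -b + c from by abel,
      show (-b + c + -c : Γ) = -b from by abel,
      show (-b + c + -b : Γ) = -b + -b + c from by abel,
      show (-b + -b + c + -c : Γ) = -b + -b from by abel]
    module
  -- bar invariance
  have hbarc0 : d.bar c0 = c0 := by
    rw [hc0def, map_add, hbar0, bar_smul, barA_qe, map_one, neg_neg, sub_smul]
    module
  have hbarc1 : d.bar c1 = c1 := by
    rw [hc1def, map_add, hbar1, bar_smul, barA_qe, map_one, neg_neg, sub_smul]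
    module
  have hbarX101 : d.bar X101 = X101 := by
    rw [hX101def, map_sub, map_mul, map_mul, hbarc0, hbarc1, bar_smul, map_add,
      barA_qe, barA_qe, neg_neg, hbarc1]
    module
  have hbarX : d.bar (c0 * X101) = c0 * X101 := by
    rw [map_mul, hbarc0, hbarX101]
  -- identification of KL basis elements
  have hCs0 : d.bC s0 = c0 := by
    refine C_eq d s0 c0 hbarc0 fun v => ?_
    have hdec : c0 - d.bT s0 = qe (-c) • d.bT 1 := by
      rw [T_one d, hc0def]; module
    rw [hdec]
    exact repr_smul_basis d (Alt0_qe hnc) 1 v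
  have hC101 : d.bC (s1 * s0 * s1) = X101 := by
    refine C_eq d _ X101 hbarX101 fun v => ?_
    have hdec : X101 - d.bT (s1 * s0 * s1) = qe (-b) • d.bT (s0 * s1)
        + qe (-b) • d.bT (s1 * s0)
        + (qe (-c + -b) - qe (-(-c + b))) • d.bT s1 + qe (-b + -b) • d.bT s0
        + (qe (-c + -b + -b) - qe (-(-c + b) + -b)) • d.bT 1 := by
      rw [T_one d, hX101]; module
    rw [hdec]
    simp only [map_add, Finsupp.add_apply]
    refine Alt0_add (Alt0_add (Alt0_add (Alt0_add ?_ ?_) ?_) ?_) ?_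
    · exact repr_smul_basis d (Alt0_qe hnb) _ v
    · exact repr_smul_basis d (Alt0_qe hnb) _ v
    · exact repr_smul_basis d (Alt0_sub (Alt0_qe (hadd _ _ hnc hnb)) (Alt0_qe hncb)) _ v
    · exact repr_smul_basis d (Alt0_qe (hadd _ _ hnb hnb)) _ v
    · exact repr_smul_basis d (Alt0_sub (Alt0_qe (hadd _ _ (hadd _ _ hnc hnb) hnb))
        (Alt0_qe (hadd _ _ hncb hnb))) _ v
  have hC4 : d.bC (s0 * s1 * s0 * s1) = c0 * X101 := by
    refine C_eq d _ (c0 * X101) hbarX fun v => ?_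
    have hdec : c0 * X101 - d.bT (s0 * s1 * s0 * s1) = qe (-c) • d.bT (s1 * s0 * s1)
        + qe (-b) • d.bT (s0 * s1 * s0)
        + qe (-c + -b) • d.bT (s0 * s1) + qe (-b + -c) • d.bT (s1 * s0)
        + qe (-c + -b + -c) • d.bT s1 + qe (-c + -b + -b) • d.bT s0
        + qe (-c + -b + -b + -c) • d.bT 1 := by
      rw [T_one d, hXfull]; module
    rw [hdec]
    simp only [map_add, Finsupp.add_apply]
    refine Alt0_add (Alt0_add (Alt0_add (Alt0_add (Alt0_add (Alt0_add ?_ ?_) ?_) ?_) ?_) ?_) ?_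
    · exact repr_smul_basis d (Alt0_qe hnc) _ v
    · exact repr_smul_basis d (Alt0_qe hnb) _ v
    · exact repr_smul_basis d (Alt0_qe (hadd _ _ hnc hnb)) _ v
    · exact repr_smul_basis d (Alt0_qe (hadd _ _ hnb hnc)) _ v
    · exact repr_smul_basis d (Alt0_qe (hadd _ _ (hadd _ _ hnc hnb) hnc)) _ v
    · exact repr_smul_basis d (Alt0_qe (hadd _ _ (hadd _ _ hnc hnb) hnb)) _ v
    · exact repr_smul_basis d (Alt0_qe (hadd _ _ (hadd _ _ (hadd _ _ hnc hnb) hnb) hnc)) _ v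
  show d.bC s0 * d.bC (s1 * s0 * s1) = d.bC (s0 * s1 * s0 * s1)
  rw [hCs0, hC101, hC4]
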